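/- If X = x is a sufficient cause (SC1–SC4) of φ in (M, u) and X = x is also an actual cause (AC1–AC3) of φ in (M, u), then they need not coincide with weak actual causes: there exists a causal setting (namely the disjunctive forest fire model with U_L = U_MD = 1) and a conjunction (L = 1 ∧ MD = 1) that is a weak actual cause (AC1–AC2) of FF = 1 but is not a sufficient cause of FF = 1 (SC4 minimality fails), while L = 1 alone is a sufficient cause of FF = 1. -/

import Mathlib

namespace Causal

/-- A causal model: a structural equation for each endogenous variable,
    taking a context (setting of exogenous variables) and a setting of the
    endogenous variables. -/
structure Model (Vu Vv : Type) (Du : Vu → Type) (Dv : Vv → Type) where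
  F : (i : Vv) → ((u : Vu) → Du u) → ((j : Vv) → Dv j) → Dv i

variable {Vu Vv : Type} {Du : Vu → Type} {Dv : Vv → Type}

abbrev Ctx (Du : Vu → Type) := (u : Vu) → Du u
abbrev World (Dv : Vv → Type) := (i : Vv) → Dv i
abbrev Event (Dv : Vv → Type) := World Dv → Prop
/-- A conjunction of primitive events X = x, as a partial assignment. -/
abbrev PA (Dv : Vv → Type) := (i : Vv) → Option (Dv i)

/-- Acyclicity: a well-founded strict order such that each structural equation
    depends only on endogenous variables strictly below it. -/
def Model.Acyclic (M : Model Vu Vv Du Dv) : Prop :=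
  ∃ r : Vv → Vv → Prop, WellFounded r ∧
    ∀ (i : Vv) (u : Ctx Du) (s s' : World Dv),
      (∀ j, r j i → s j = s' j) → M.F i u s = M.F i u s'

/-- s is a solution of the causal setting (M, u). -/
def Model.Solves (M : Model Vu Vv Du Dv) (u : Ctx Du) (s : World Dv) : Prop :=
  ∀ i, s i = M.F i u s

/-- (M, u) ⊨ φ : every solution (in particular the unique actual world) satisfies φ. -/
def Model.sat (M : Model Vu Vv Du Dv) (u : Ctx Du) (φ : Event Dv) : Prop :=
  ∀ s, M.Solves u s → φ s

namespace PA

def event (g : PA Dv) : Event Dv := fun s => ∀ i v, g i = some v → s i = v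

def subset (g h : PA Dv) : Prop := ∀ i v, g i = some v → h i = some v

def ssubset (g h : PA Dv) : Prop := subset g h ∧ g ≠ h

def union (g h : PA Dv) : PA Dv := fun i => (g i).orElse (fun _ => h i)

def sameDom (g h : PA Dv) : Prop := ∀ i, (g i).isSome ↔ (h i).isSome

def Nonempty (g : PA Dv) : Prop := ∃ i, (g i).isSome

def disjoint (g h : PA Dv) : Prop := ∀ i, (g i).isSome → h i = none

/-- Pointwise difference condition: x_i ≠ x_i' for each X_i ∈ X. -/
def diff (g h : PA Dv) : Prop := ∀ i v v', g i = some v → h i = some v' → v ≠ v'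

end PA

/-- Intervention M_{X←x}. -/
def Model.intervene (M : Model Vu Vv Du Dv) (g : PA Dv) : Model Vu Vv Du Dv where
  F i u s := (g i).getD (M.F i u s)

/-- AC1 : (M,u) ⊨ (X = x) ∧ φ. -/
def AC1 (M : Model Vu Vv Du Dv) (u : Ctx Du) (g : PA Dv) (φ : Event Dv) : Prop :=
  M.sat u (fun s => g.event s ∧ φ s)

/-- AC2 : there are W ⊆ V (with its actual setting w) and a setting x' of X with
    (M,u) ⊨ [X ← x', W ← w]¬φ. -/
def AC2 (M : Model Vu Vv Du Dv) (u : Ctx Du) (g : PA Dv) (φ : Event Dv) : Prop :=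
  ∃ w x' : PA Dv, x'.sameDom g ∧ M.sat u w.event ∧
    (M.intervene (x'.union w)).sat u (fun s => ¬ φ s)

/-- Weak actual cause: AC1–AC2. -/
def WeakCause (M : Model Vu Vv Du Dv) (u : Ctx Du) (g : PA Dv) (φ : Event Dv) : Prop :=
  AC1 M u g φ ∧ AC2 M u g φ

/-- Actual cause: AC1–AC3. -/
def ActualCause (M : Model Vu Vv Du Dv) (u : Ctx Du) (g : PA Dv) (φ : Event Dv) : Prop :=
  WeakCause M u g φ ∧ ∀ h : PA Dv, h.ssubset g → ¬ WeakCause M u h φ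

/-- X = x is a partial cause (subset of a cause) w.r.t. a notion of cause. -/
def PartialCause (Cause : Model Vu Vv Du Dv → Ctx Du → PA Dv → Event Dv → Prop)
    (M : Model Vu Vv Du Dv) (u : Ctx Du) (g : PA Dv) (φ : Event Dv) : Prop :=
  ∃ h : PA Dv, g.subset h ∧ Cause M u h φ

/-- Some conjunct of g is part of an actual cause of φ. -/
def IntersectsActualCause (M : Model Vu Vv Du Dv) (u : Ctx Du) (g : PA Dv) (φ : Event Dv) : Prop :=
  ∃ (i : Vv) (v : Dv i) (c : PA Dv), g i = some v ∧ c i = some v ∧ ActualCause M u c φ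

/-- Sufficient cause, clauses SC1–SC3. -/
def SuffCauseCore (M : Model Vu Vv Du Dv) (u : Ctx Du) (g : PA Dv) (φ : Event Dv) : Prop :=
  AC1 M u g φ ∧ IntersectsActualCause M u g φ ∧
    ∀ u' : Ctx Du, (M.intervene g).sat u' φ

/-- Sufficient cause: SC1–SC4. -/
def SuffCause (M : Model Vu Vv Du Dv) (u : Ctx Du) (g : PA Dv) (φ : Event Dv) : Prop :=
  SuffCauseCore M u g φ ∧ ∀ h : PA Dv, h.ssubset g → ¬ SuffCauseCore M u h φ

/-! ### Original HP explanations -/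

/-- EX2 : g is a weak actual cause of φ in every plausible context where g holds. -/
def EX2 (M : Model Vu Vv Du Dv) (K : Set (Ctx Du)) (g : PA Dv) (φ : Event Dv) : Prop :=
  ∀ u ∈ K, M.sat u g.event → WeakCause M u g φ

/-- Original HP explanation: EX1–EX4. -/
def OrigExpl (M : Model Vu Vv Du Dv) (K : Set (Ctx Du)) (g : PA Dv) (φ : Event Dv) : Prop :=
  (∀ u ∈ K, M.sat u φ) ∧
  EX2 M K g φ ∧
  (∀ h : PA Dv, h.ssubset g → ¬ EX2 M K h φ) ∧
  ((∃ u ∈ K, M.sat u (fun s => ¬ g.event s)) ∧ (∃ u' ∈ K, M.sat u' g.event))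

/-! ### Modified HP explanations -/

/-- EX1' : (a) g intersects an actual cause in any plausible context where g and φ hold,
    and (b) g is sufficient to bring about φ in any plausible context. -/
def EX1' (M : Model Vu Vv Du Dv) (K : Set (Ctx Du)) (g : PA Dv) (φ : Event Dv) : Prop :=
  ∀ u ∈ K,
    (M.sat u (fun s => g.event s ∧ φ s) → IntersectsActualCause M u g φ) ∧
    (M.intervene g).sat u φ

/-- Modified HP explanation: EX1'–EX3'. -/
def ModExpl (M : Model Vu Vv Du Dv) (K : Set (Ctx Du)) (g : PA Dv) (φ : Event Dv) : Prop :=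
  EX1' M K g φ ∧
  (∀ h : PA Dv, h.ssubset g → ¬ EX1' M K h φ) ∧
  (∃ u ∈ K, M.sat u (fun s => g.event s ∧ φ s))

/-- EX4' : non-triviality. -/
def EX4' (M : Model Vu Vv Du Dv) (K : Set (Ctx Du)) (g : PA Dv) (φ : Event Dv) : Prop :=
  ∃ u ∈ K, M.sat u (fun s => ¬ g.event s ∧ φ s)

/-- Non-trivial modified HP explanation: EX1'–EX4'. -/
def ModExplNT (M : Model Vu Vv Du Dv) (K : Set (Ctx Du)) (g : PA Dv) (φ : Event Dv) : Prop :=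
  ModExpl M K g φ ∧ EX4' M K g φ

/-! ### Borner explanations -/

/-- E1–E2, with witness S = s. -/
def BornerE12With (M : Model Vu Vv Du Dv) (K : Set (Ctx Du)) (g s : PA Dv) (φ : Event Dv) : Prop :=
  g.disjoint s ∧
  ∀ u ∈ K, (M.sat u g.event → SuffCause M u (g.union s) φ) ∧ M.sat u s.event

def BornerE12 (M : Model Vu Vv Du Dv) (K : Set (Ctx Du)) (g : PA Dv) (φ : Event Dv) : Prop :=
  ∃ s : PA Dv, BornerE12With M K g s φ

/-- Potential Borner explanation: E1–E4. -/
def PotBorner (M : Model Vu Vv Du Dv) (K : Set (Ctx Du)) (g : PA Dv) (φ : Event Dv) : Prop :=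
  BornerE12 M K g φ ∧
  (∃ u ∈ K, M.sat u (fun s => g.event s ∧ φ s)) ∧
  (∃ u ∈ K, M.sat u (fun s => ¬ g.event s ∧ φ s))

/-- Parsimonious potential Borner explanation: E1–E4, E6. -/
def ParsPotBorner (M : Model Vu Vv Du Dv) (K : Set (Ctx Du)) (g : PA Dv) (φ : Event Dv) : Prop :=
  PotBorner M K g φ ∧ ∀ h : PA Dv, h.ssubset g → ¬ BornerE12 M K h φ

/-- Actual Borner explanation: E1–E3, E5. -/
def ActBorner (M : Model Vu Vv Du Dv) (K : Set (Ctx Du)) (g : PA Dv) (φ : Event Dv) : Prop :=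
  BornerE12 M K g φ ∧
  (∃ u ∈ K, M.sat u (fun s => g.event s ∧ φ s)) ∧
  (∀ u ∈ K, M.sat u (fun s => g.event s ∧ φ s))

/-! ### Contrastive causes (CC1–CC5), parameterised by a notion of cause -/

/-- CC1–CC4 for the pair ⟨g, g'⟩ and ⟨φ, ψ⟩. -/
def CCcore (Cause : Model Vu Vv Du Dv → Ctx Du → PA Dv → Event Dv → Prop)
    (M : Model Vu Vv Du Dv) (u : Ctx Du) (g g' : PA Dv) (φ ψ : Event Dv) : Prop :=
  g.sameDom g' ∧
  PartialCause Cause M u g φ ∧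
  M.sat u (fun s => ¬ ψ s) ∧
  (∃ w : PA Dv, w.Nonempty ∧ PartialCause Cause (M.intervene w) u g' ψ) ∧
  g.diff g'

/-- Contrastive cause: CC1–CC5. -/
def ContrastiveCause (Cause : Model Vu Vv Du Dv → Ctx Du → PA Dv → Event Dv → Prop)
    (M : Model Vu Vv Du Dv) (u : Ctx Du) (g g' : PA Dv) (φ ψ : Event Dv) : Prop :=
  CCcore Cause M u g g' φ ψ ∧
  ∀ h h' : PA Dv, g.subset h → g'.subset h' → CCcore Cause M u h h' φ ψ → h = g ∧ h' = g'

/-- Strict refinement of a pair (used for pair-minimality clauses). -/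
def PairSSub (h h' g g' : PA Dv) : Prop :=
  PA.subset h g ∧ PA.subset h' g' ∧ ¬ (h = g ∧ h' = g')

/-! ### Miller contrastive explanations (CE1–CE4) -/

/-- CE2 : contrastive weak actual cause in every plausible context where g holds. -/
def CE2 (M : Model Vu Vv Du Dv) (K : Set (Ctx Du)) (g g' : PA Dv) (φ ψ : Event Dv) : Prop :=
  ∀ u ∈ K, M.sat u g.event → ContrastiveCause WeakCause M u g g' φ ψ

/-- Miller contrastive explanation: CE1–CE4. -/
def MillerCE (M : Model Vu Vv Du Dv) (K : Set (Ctx Du)) (g g' : PA Dv) (φ ψ : Event Dv) : Prop :=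
  (∀ u ∈ K, M.sat u (fun s => φ s ∧ ¬ ψ s)) ∧
  CE2 M K g g' φ ψ ∧
  (∀ h h' : PA Dv, PairSSub h h' g g' → ¬ CE2 M K h h' φ ψ) ∧
  (((∃ u ∈ K, M.sat u (fun s => ¬ g.event s)) ∧ (∃ u' ∈ K, M.sat u' g.event)) ∧
   (∃ w : PA Dv, w.Nonempty ∧ w ≠ g ∧
     (∃ u ∈ K, (M.intervene w).sat u (fun s => ¬ g'.event s)) ∧
     (∃ u' ∈ K, (M.intervene w).sat u' g'.event)))

/-! ### Modular contrastive explanations (Definition 3), parameterised by a notion of explanation -/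

/-- CE1'–CE3'. -/
def ModularCore (Expl : Model Vu Vv Du Dv → Set (Ctx Du) → PA Dv → Event Dv → Prop)
    (M : Model Vu Vv Du Dv) (K : Set (Ctx Du)) (g g' : PA Dv) (φ ψ : Event Dv) : Prop :=
  g.sameDom g' ∧
  (∃ h : PA Dv, g.subset h ∧ Expl M K h φ) ∧
  (∃ w : PA Dv, w.Nonempty ∧ ∃ h : PA Dv, g'.subset h ∧ Expl (M.intervene w) K h ψ) ∧
  g.diff g'

/-- Modular contrastive explanation: CE1'–CE4'. -/
def Modular (Expl : Model Vu Vv Du Dv → Set (Ctx Du) → PA Dv → Event Dv → Prop)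
    (M : Model Vu Vv Du Dv) (K : Set (Ctx Du)) (g g' : PA Dv) (φ ψ : Event Dv) : Prop :=
  ModularCore Expl M K g g' φ ψ ∧
  ∀ h h' : PA Dv, g.subset h → g'.subset h' → ModularCore Expl M K h h' φ ψ → h = g ∧ h' = g'

/-! ### Modified HP contrastive explanations (Definition 1: CH1–CH4) -/

/-- CH1(a)–(c) for a single context u. -/
def CH1abc (M : Model Vu Vv Du Dv) (u : Ctx Du) (g g' : PA Dv) (φ ψ : Event Dv) : Prop :=
  (M.sat u (fun s => g.event s ∧ φ s ∧ ¬ ψ s) →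
    ∃ (i : Vv) (v v' : Dv i) (c c' : PA Dv), g i = some v ∧ g' i = some v' ∧
      c i = some v ∧ c' i = some v' ∧ ContrastiveCause ActualCause M u c c' φ ψ) ∧
  (∃ s s' : PA Dv, s.sameDom s' ∧ g.disjoint s ∧
    (M.intervene (g.union s)).sat u φ ∧
    (∃ w : PA Dv, w.Nonempty ∧ w ≠ g ∧
      ((M.intervene w).intervene (g'.union s')).sat u ψ)) ∧
  g.diff g'

/-- CH1 : for each u ∈ K, (a)–(c) and maximality (d). -/
def CH1 (M : Model Vu Vv Du Dv) (K : Set (Ctx Du)) (g g' : PA Dv) (φ ψ : Event Dv) : Prop :=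
  ∀ u ∈ K, CH1abc M u g g' φ ψ ∧
    ∀ h h' : PA Dv, g.subset h → g'.subset h' → CH1abc M u h h' φ ψ → h = g ∧ h' = g'

/-- Modified HP contrastive explanation: CH1–CH3. -/
def ModCE (M : Model Vu Vv Du Dv) (K : Set (Ctx Du)) (g g' : PA Dv) (φ ψ : Event Dv) : Prop :=
  CH1 M K g g' φ ψ ∧
  (∀ h h' : PA Dv, PairSSub h h' g g' → ¬ CH1 M K h h' φ ψ) ∧
  (∃ u ∈ K, M.sat u (fun s => g.event s ∧ φ s ∧ ¬ ψ s))

/-- CH4 : non-triviality. -/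
def CH4 (M : Model Vu Vv Du Dv) (K : Set (Ctx Du)) (g g' : PA Dv) (φ ψ : Event Dv) : Prop :=
  (∃ u ∈ K, M.sat u (fun s => ¬ g.event s ∧ φ s)) ∧
  (∃ w : PA Dv, w.Nonempty ∧ w ≠ g ∧
    ∃ u ∈ K, (M.intervene w).sat u (fun s => ¬ g'.event s ∧ ψ s))

/-! ### Borner contrastive explanations (Definition 2: CB1–CB6) -/

/-- CB1–CB2 with witness pair ⟨S = s, S = s'⟩. -/
def CB12With (M : Model Vu Vv Du Dv) (K : Set (Ctx Du)) (g g' s s' : PA Dv) (φ ψ : Event Dv) : Prop :=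
  s.sameDom s' ∧ g.disjoint s ∧
  ∀ u ∈ K,
    (M.sat u g.event → ContrastiveCause SuffCause M u (g.union s) (g'.union s') φ ψ) ∧
    M.sat u s.event ∧
    (∃ w : PA Dv, w.Nonempty ∧ w ≠ g ∧ (M.intervene w).sat u s'.event)

def CB12 (M : Model Vu Vv Du Dv) (K : Set (Ctx Du)) (g g' : PA Dv) (φ ψ : Event Dv) : Prop :=
  ∃ s s' : PA Dv, CB12With M K g g' s s' φ ψ

/-- Potential Borner contrastive explanation: CB1–CB4. -/
def PotBornerCE (M : Model Vu Vv Du Dv) (K : Set (Ctx Du)) (g g' : PA Dv) (φ ψ : Event Dv) : Prop :=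
  CB12 M K g g' φ ψ ∧
  (∃ u ∈ K, M.sat u (fun s => g.event s ∧ φ s ∧ ¬ ψ s)) ∧
  CH4 M K g g' φ ψ

/-- Actual Borner contrastive explanation: CB1–CB3, CB5. -/
def ActBornerCE (M : Model Vu Vv Du Dv) (K : Set (Ctx Du)) (g g' : PA Dv) (φ ψ : Event Dv) : Prop :=
  CB12 M K g g' φ ψ ∧
  (∃ u ∈ K, M.sat u (fun s => g.event s ∧ φ s ∧ ¬ ψ s)) ∧
  (∀ u ∈ K, M.sat u (fun s => g.event s ∧ φ s ∧ ¬ ψ s))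

end Causal

namespace DFF
open Causal

inductive XU | uL | uMD
  deriving DecidableEq
inductive XV | L | MD | FF
  deriving DecidableEq

/-- The disjunctive forest fire model: L := U_L, MD := U_MD, FF := L ∨ MD. -/
def M : Model XU XV (fun _ => Bool) (fun _ => Bool) where
  F i u s :=
    match i with
    | .L => u .uL
    | .MD => u .uMD
    | .FF => s .L || s .MD

/-- The event FF = 1. -/
def φFF : Event (fun _ : XV => Bool) := fun s => s .FF = true

/-- The conjunction L = 1. -/
def paL : PA (fun _ : XV => Bool) := fun i =>
  match i with | .L => some true | _ => none

/-- The conjunction MD = 1. -/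
def paMD : PA (fun _ : XV => Bool) := fun i =>
  match i with | .MD => some true | _ => none

/-- The conjunction L = 1 ∧ MD = 1. -/
def paLMD : PA (fun _ : XV => Bool) := fun i =>
  match i with | .L => some true | .MD => some true | _ => none

/-- The conjunction FF = 1. -/
def paFF : PA (fun _ : XV => Bool) := fun i =>
  match i with | .FF => some true | _ => none

end DFF

namespace DFF
open Causal

abbrev uAll : Ctx (fun _ : XU => Bool) := fun _ => true

lemma sol_char (s : World (fun _ : XV => Bool)) (h : M.Solves uAll s) :
    s .L = true ∧ s .MD = true ∧ s .FF = true := by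
  have hL := h .L
  have hMD := h .MD
  have hFF := h .FF
  simp [M] at hL hMD hFF
  exact ⟨hL, hMD, by simp [hFF, hL]⟩

/-- If the intervention leaves MD and FF free-or-true, there is a solution with FF = true. -/
lemma exists_sol_MD (p : PA (fun _ : XV => Bool))
    (hMD : p .MD = none ∨ p .MD = some true)
    (hFF : p .FF = none ∨ p .FF = some true) :
    ∃ t, (M.intervene p).Solves uAll t ∧ t .FF = true := by
  refine ⟨fun i => match i with
    | .L => (p .L).getD true
    | .MD => true
    | .FF => true, ?_, rfl⟩
  intro i
  cases i <;> simp [Model.intervene, M]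
  · rcases hMD with h | h <;> simp [h]
  · rcases hFF with h | h <;> simp [h]

lemma exists_sol_L (p : PA (fun _ : XV => Bool))
    (hL : p .L = none ∨ p .L = some true)
    (hFF : p .FF = none ∨ p .FF = some true) :
    ∃ t, (M.intervene p).Solves uAll t ∧ t .FF = true := by
  refine ⟨fun i => match i with
    | .L => true
    | .MD => (p .MD).getD true
    | .FF => true, ?_, rfl⟩
  intro i
  cases i <;> simp [Model.intervene, M]
  · rcases hL with h | h <;> simp [h]
  · rcases hFF with h | h <;> simp [h]

lemma wEvent_values {w : PA (fun _ : XV => Bool)} (hw : M.sat uAll w.event) (i : XV) :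
    w i = none ∨ w i = some true := by
  have hsol : M.Solves uAll (fun _ => true) := by
    intro j; cases j <;> simp [M]
  have := hw _ hsol
  cases h : w i with
  | none => exact Or.inl rfl
  | some v => exact Or.inr (by rw [(this i v h).symm])

lemma AC1_LMD : AC1 M uAll paLMD φFF := by
  intro s hs
  obtain ⟨h1, h2, h3⟩ := sol_char s hs
  refine ⟨?_, h3⟩
  intro i v hv
  cases i <;> simp [paLMD] at hv <;> simp [hv.symm, h1, h2]

lemma weak_LMD : WeakCause M uAll paLMD φFF := by
  refine ⟨AC1_LMD, ?_⟩
  refine ⟨fun _ => none, fun i => match i with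
    | .L => some false | .MD => some false | .FF => none, ?_, ?_, ?_⟩
  · intro i; cases i <;> simp [paLMD]
  · intro s _ i v hv; simp at hv
  · intro s hs
    have hL := hs .L
    have hMD := hs .MD
    have hFF := hs .FF
    simp [Model.intervene, M, PA.union] at hL hMD hFF
    simp [φFF, hFF, hL, hMD]

lemma not_weak_sub (h : PA (fun _ : XV => Bool)) (hss : h.ssubset paLMD) :
    ¬ WeakCause M uAll h φFF := by
  rintro ⟨_, w, x', hdom, hw, hneg⟩
  have hFFn : h .FF = none := by
    cases hh : h .FF with
    | none => rfl
    | some v => have := hss.1 .FF v hh; simp [paLMD] at this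
  have hx'FF : x' .FF = none := by
    have := (hdom .FF).1
    cases hx : x' .FF with
    | none => rfl
    | some v => simp [hx, hFFn] at this
  have hwvals := wEvent_values hw
  have hFFu : x'.union w .FF = none ∨ x'.union w .FF = some true := by
    simp [PA.union, hx'FF]; exact hwvals .FF
  cases hMD : h .MD with
  | none =>
    have hx'MD : x' .MD = none := by
      have := (hdom .MD).1
      cases hx : x' .MD with
      | none => rfl
      | some v => simp [hx, hMD] at this
    have hMDu : x'.union w .MD = none ∨ x'.union w .MD = some true := by
      simp [PA.union, hx'MD]; exact hwvals .MD
    obtain ⟨t, ht, hFFt⟩ := exists_sol_MD (x'.union w) hMDu hFFu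
    exact hneg t ht hFFt
  | some v =>
    have hv : v = true := by
      have := hss.1 .MD v hMD; simp [paLMD] at this; exact this
    have hLn : h .L = none := by
      cases hh : h .L with
      | none => rfl
      | some v' =>
        have hv' : v' = true := by
          have := hss.1 .L v' hh; simp [paLMD] at this; exact this
        exfalso; apply hss.2
        funext i
        cases i <;> simp [paLMD, hh, hv', hMD, hv, hFFn]
    have hx'L : x' .L = none := by
      have := (hdom .L).1
      cases hx : x' .L with
      | none => rfl
      | some v'' => simp [hx, hLn] at this
    have hLu : x'.union w .L = none ∨ x'.union w .L = some true := by
      simp [PA.union, hx'L]; exact hwvals .L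
    obtain ⟨t, ht, hFFt⟩ := exists_sol_L (x'.union w) hLu hFFu
    exact hneg t ht hFFt

lemma actual_LMD : ActualCause M uAll paLMD φFF :=
  ⟨weak_LMD, fun h hss => not_weak_sub h hss⟩

lemma core_L : SuffCauseCore M uAll paL φFF := by
  refine ⟨?_, ⟨.L, true, paLMD, rfl, rfl, actual_LMD⟩, ?_⟩
  · intro s hs
    obtain ⟨h1, _, h3⟩ := sol_char s hs
    refine ⟨?_, h3⟩
    intro i v hv
    cases i <;> simp [paL] at hv <;> simp [hv.symm, h1]
  · intro u' s hs
    have hL := hs .L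
    have hFF := hs .FF
    simp [Model.intervene, M, paL] at hL hFF
    simp [φFF, hFF, hL]

lemma suff_L : SuffCause M uAll paL φFF := by
  refine ⟨core_L, ?_⟩
  rintro h ⟨hsub, hne⟩ ⟨_, ⟨i, v, c, hiv, _⟩, _⟩
  have hall : ∀ j, h j = none := by
    intro j
    cases hh : h j with
    | none => rfl
    | some v' =>
      have hp := hsub j v' hh
      exfalso; apply hne
      have hMD : h XV.MD = none := by
        cases h2 : h XV.MD with
        | none => rfl
        | some z => have := hsub _ z h2; simp [paL] at this
      have hFF : h XV.FF = none := by
        cases h2 : h XV.FF with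
        | none => rfl
        | some z => have := hsub _ z h2; simp [paL] at this
      have hL : h XV.L = some true := by
        cases j <;> simp [paL] at hp
        · rw [hh, hp]
      funext k
      cases k <;> simp [paL, hL, hMD, hFF]
  rw [hall i] at hiv; cases hiv

end DFF

/-- in the disjunctive forest fire model with U_L = U_MD = 1,
    L = 1 ∧ MD = 1 is a weak actual cause of FF = 1 but not a sufficient cause
    (SC4 minimality fails), while L = 1 alone is a sufficient cause of FF = 1. -/
theorem dff_weak_vs_sufficient :
    Causal.WeakCause DFF.M (fun _ => true) DFF.paLMD DFF.φFF ∧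
    ¬ Causal.SuffCause DFF.M (fun _ => true) DFF.paLMD DFF.φFF ∧
    Causal.SuffCause DFF.M (fun _ => true) DFF.paL DFF.φFF := by
  refine ⟨DFF.weak_LMD, ?_, DFF.suff_L⟩
  rintro ⟨-, hmin⟩
  apply hmin DFF.paL ?_ DFF.core_L
  constructor
  · intro i v hv; cases i <;> simp_all [DFF.paL, DFF.paLMD]
  · intro h
    have := congrFun h DFF.XV.MD
    simp [DFF.paL, DFF.paLMD] at this
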